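/- Let P : ℝⁿ → ℝ be twice differentiable with H_L-Lipschitz Hessian. Suppose g, H approximate ∇P(x), ∇²P(x) with ‖∇P(x) − g‖ ≤ ε/12 and ‖∇²P(x) − H‖ ≤ √(ε·H_L)/6, and s, λ satisfy the trust-region optimality conditions g + (H + (λH_L/2))s = 0, H + (λH_L/2)I ⪰ 0, ‖s‖ = √(ε/H_L) with λ ≥ 2√(ε/H_L). Then P(x+s) − P(x) ≤ −(1/6)ε^{3/2}/√(H_L). -/

import Mathlib

open scoped RealInnerProductSpace

lemma taylor2_aux {E : Type*} [NormedAddCommGroup E] [InnerProductSpace ℝ E] [CompleteSpace E]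
    (P : E → ℝ) (gP : E → E) (hessP : E → (E →L[ℝ] E))
    (hgrad : ∀ x, HasGradientAt P (gP x) x)
    (hhess : ∀ x, HasFDerivAt gP (hessP x) x)
    (HL : ℝ) (hHL : 0 ≤ HL)
    (hlip : ∀ a b, ‖hessP a - hessP b‖ ≤ HL * ‖a - b‖)
    (x s : E) :
    P (x + s) ≤ P x + ⟪gP x, s⟫ + (1/2) * ⟪hessP x s, s⟫ + HL / 6 * ‖s‖ ^ 3 := by
  have hc : ∀ t : ℝ, HasDerivAt (fun t : ℝ => x + t • s) s t := by
    intro t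
    simpa using ((hasDerivAt_id t).smul_const s).const_add x
  -- derivative of gP along the curve
  have hg' : ∀ t : ℝ, HasDerivAt (fun t : ℝ => gP (x + t • s)) (hessP (x + t • s) s) t := by
    intro t
    exact (hhess (x + t • s)).comp_hasDerivAt t (hc t)
  set f : ℝ → E := fun t => gP (x + t • s) - gP x - t • (hessP x s) with hf
  have hf' : ∀ t : ℝ, HasDerivAt f (hessP (x + t • s) s - hessP x s) t := by
    intro t
    have h2 : HasDerivAt (fun t : ℝ => t • (hessP x s)) (hessP x s) t := by
      simpa using (hasDerivAt_id t).smul_const (hessP x s)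
    exact ((hg' t).sub_const (gP x)).sub h2
  have hfbound : ∀ t ∈ Set.Icc (0:ℝ) 1, ‖f t‖ ≤ HL * ‖s‖ ^ 2 * (t ^ 2 / 2) := by
    have hB : ∀ t : ℝ, HasDerivAt (fun t : ℝ => HL * ‖s‖ ^ 2 * (t ^ 2 / 2)) (HL * ‖s‖ ^ 2 * t) t := by
      intro t
      have := ((hasDerivAt_pow 2 t).div_const 2).const_mul (HL * ‖s‖ ^ 2)
      exact this.congr_deriv (by push_cast; ring)
    refine image_norm_le_of_norm_deriv_right_le_deriv_boundary
      (f := f) (a := 0) (b := 1) (f' := fun t => hessP (x + t • s) s - hessP x s)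
      (fun t _ => (hf' t).continuousAt.continuousWithinAt)
      (fun t _ => (hf' t).hasDerivWithinAt) ?_ hB ?_
    · simp [hf]
    · intro t ht
      have h1 : ‖hessP (x + t • s) s - hessP x s‖ ≤ ‖hessP (x + t • s) - hessP x‖ * ‖s‖ := by
        have := (hessP (x + t • s) - hessP x).le_opNorm s
        simpa using this
      have h2 : ‖hessP (x + t • s) - hessP x‖ ≤ HL * (t * ‖s‖) := by
        have := hlip (x + t • s) x
        simpa [norm_smul, abs_of_nonneg ht.1] using this
      calc ‖hessP (x + t • s) s - hessP x s‖ ≤ HL * (t * ‖s‖) * ‖s‖ :=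
            h1.trans (by
              have : (0:ℝ) ≤ ‖s‖ := norm_nonneg s
              nlinarith [norm_nonneg (hessP (x + t • s) - hessP x)])
        _ = HL * ‖s‖ ^ 2 * t := by ring
  -- second step
  set ψ : ℝ → ℝ := fun t => P (x + t • s) - t * ⟪gP x, s⟫ - t ^ 2 / 2 * ⟪hessP x s, s⟫
      - HL * ‖s‖ ^ 3 * t ^ 3 / 6 with hψ
  have hP' : ∀ t : ℝ, HasDerivAt (fun t : ℝ => P (x + t • s)) (⟪gP (x + t • s), s⟫) t := by
    intro t
    have := ((hgrad (x + t • s)).hasFDerivAt).comp_hasDerivAt t (hc t)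
    simpa [InnerProductSpace.toDual_apply_apply, Function.comp_def] using this
  have hψ' : ∀ t : ℝ, HasDerivAt ψ
      (⟪gP (x + t • s), s⟫ - ⟪gP x, s⟫ - t * ⟪hessP x s, s⟫ - HL * ‖s‖ ^ 3 * t ^ 2 / 2) t := by
    intro t
    have h1 : HasDerivAt (fun t : ℝ => t * ⟪gP x, s⟫) (⟪gP x, s⟫) t := by
      simpa using (hasDerivAt_id t).mul_const (⟪gP x, s⟫)
    have h2 : HasDerivAt (fun t : ℝ => t ^ 2 / 2 * ⟪hessP x s, s⟫) (t * ⟪hessP x s, s⟫) t := by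
      have := ((hasDerivAt_pow 2 t).div_const 2).mul_const (⟪hessP x s, s⟫)
      exact this.congr_deriv (by push_cast; ring)
    have h3 : HasDerivAt (fun t : ℝ => HL * ‖s‖ ^ 3 * t ^ 3 / 6) (HL * ‖s‖ ^ 3 * t ^ 2 / 2) t := by
      have := ((hasDerivAt_pow 3 t).const_mul (HL * ‖s‖ ^ 3)).div_const 6
      exact this.congr_deriv (by push_cast; ring)
    exact (((hP' t).sub h1).sub h2).sub h3
  have hmono : AntitoneOn ψ (Set.Icc (0:ℝ) 1) := by
    refine antitoneOn_of_deriv_nonpos (convex_Icc 0 1)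
      (fun t _ => (hψ' t).continuousAt.continuousWithinAt)
      (fun t _ => (hψ' t).differentiableAt.differentiableWithinAt) ?_
    intro t ht
    rw [interior_Icc] at ht
    rw [(hψ' t).deriv]
    have hft : ‖f t‖ ≤ HL * ‖s‖ ^ 2 * (t ^ 2 / 2) :=
      hfbound t ⟨ht.1.le, ht.2.le⟩
    have hinner : ⟪gP (x + t • s), s⟫ - ⟪gP x, s⟫ - t * ⟪hessP x s, s⟫ = ⟪f t, s⟫ := by
      simp [hf, inner_sub_left, real_inner_smul_left]
    have h4 : ⟪f t, s⟫ ≤ ‖f t‖ * ‖s‖ := real_inner_le_norm _ _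
    have h5 : ‖f t‖ * ‖s‖ ≤ HL * ‖s‖ ^ 2 * (t ^ 2 / 2) * ‖s‖ :=
      mul_le_mul_of_nonneg_right hft (norm_nonneg s)
    have : ⟪gP (x + t • s), s⟫ - ⟪gP x, s⟫ - t * ⟪hessP x s, s⟫ ≤ HL * ‖s‖ ^ 3 * t ^ 2 / 2 := by
      rw [hinner]
      calc ⟪f t, s⟫ ≤ HL * ‖s‖ ^ 2 * (t ^ 2 / 2) * ‖s‖ := h4.trans h5
        _ = HL * ‖s‖ ^ 3 * t ^ 2 / 2 := by ring
    linarith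
  have h01 : ψ 1 ≤ ψ 0 := hmono (Set.left_mem_Icc.2 zero_le_one) (Set.right_mem_Icc.2 zero_le_one) zero_le_one
  simp only [hψ, one_smul, zero_smul, add_zero, one_pow, zero_pow, one_mul, zero_mul] at h01
  norm_num at h01
  linarith

set_option maxHeartbeats 1000000 in
/-- MINIMAX-TR descent: under inexact trust-region optimality conditions with
`λ ≥ 2√(ε/H_L)`, the step gives `P(x+s) − P(x) ≤ −(1/6)ε^{3/2}/√H_L`. -/
theorem stmt8 {n : ℕ} (ε HL lam : ℝ) (hε : 0 < ε) (hHL : 0 < HL)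
    (P : EuclideanSpace ℝ (Fin n) → ℝ)
    (gP : EuclideanSpace ℝ (Fin n) → EuclideanSpace ℝ (Fin n))
    (hessP : EuclideanSpace ℝ (Fin n) → (EuclideanSpace ℝ (Fin n) →L[ℝ] EuclideanSpace ℝ (Fin n)))
    (hgrad : ∀ x, HasGradientAt P (gP x) x)
    (hhess : ∀ x, HasFDerivAt gP (hessP x) x)
    (hlipHess : ∀ a b, ‖hessP a - hessP b‖ ≤ HL * ‖a - b‖)
    (x g s : EuclideanSpace ℝ (Fin n))
    (H : EuclideanSpace ℝ (Fin n) →L[ℝ] EuclideanSpace ℝ (Fin n)) (hsa : IsSelfAdjoint H)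
    (hgerr : ‖gP x - g‖ ≤ ε / 12)
    (hHerr : ‖hessP x - H‖ ≤ Real.sqrt (ε * HL) / 6)
    (hkkt1 : g + (H + (lam * HL / 2) • ContinuousLinearMap.id ℝ (EuclideanSpace ℝ (Fin n))) s = 0)
    (hkkt2 : ∀ v, 0 ≤ ⟪v, (H + (lam * HL / 2) • ContinuousLinearMap.id ℝ (EuclideanSpace ℝ (Fin n))) v⟫)
    (hsnorm : ‖s‖ = Real.sqrt (ε / HL))
    (hlam : lam ≥ 2 * Real.sqrt (ε / HL)) :
    P (x + s) - P x ≤ -(1/6) * ε ^ ((3 : ℝ)/2) / Real.sqrt HL := by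
  have htaylor := taylor2_aux P gP hessP hgrad hhess HL hHL.le hlipHess x s
  set c : ℝ := lam * HL / 2 with hc
  -- unpack kkt1
  have hkkt1' : g + (H s + c • s) = 0 := by
    simpa [ContinuousLinearMap.add_apply, ContinuousLinearMap.smul_apply] using hkkt1
  have hgeq : g = -(H s + c • s) := by linear_combination (norm := module) hkkt1'
  have hns : (0:ℝ) ≤ ‖s‖ := norm_nonneg s
  -- bound on ⟪gP x, s⟫
  have h1 : ⟪gP x, s⟫ ≤ -⟪H s, s⟫ - c * ‖s‖ ^ 2 + ε / 12 * ‖s‖ := by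
    have e1 : ⟪gP x, s⟫ = ⟪g, s⟫ + ⟪gP x - g, s⟫ := by
      rw [inner_sub_left]; ring
    have e2 : ⟪g, s⟫ = -⟪H s, s⟫ - c * ‖s‖ ^ 2 := by
      rw [hgeq, inner_neg_left, inner_add_left, real_inner_smul_left,
        real_inner_self_eq_norm_sq]
      ring
    have e3 : ⟪gP x - g, s⟫ ≤ ε / 12 * ‖s‖ :=
      (real_inner_le_norm _ _).trans (mul_le_mul_of_nonneg_right hgerr hns)
    linarith [e1, e2, e3]
  -- bound on ⟪hessP x s, s⟫
  have h2 : ⟪hessP x s, s⟫ ≤ ⟪H s, s⟫ + Real.sqrt (ε * HL) / 6 * ‖s‖ ^ 2 := by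
    have e1 : ⟪hessP x s, s⟫ = ⟪H s, s⟫ + ⟪(hessP x - H) s, s⟫ := by
      rw [ContinuousLinearMap.sub_apply, inner_sub_left]; ring
    have e2 : ⟪(hessP x - H) s, s⟫ ≤ Real.sqrt (ε * HL) / 6 * ‖s‖ ^ 2 := by
      refine (real_inner_le_norm _ _).trans ?_
      have := (hessP x - H).le_opNorm s
      have h3 : ‖(hessP x - H) s‖ * ‖s‖ ≤ ‖hessP x - H‖ * ‖s‖ * ‖s‖ :=
        mul_le_mul_of_nonneg_right this hns
      nlinarith [norm_nonneg ((hessP x - H) s)]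
    linarith
  -- positive semidefiniteness
  have h3 : -⟪H s, s⟫ ≤ c * ‖s‖ ^ 2 := by
    have := hkkt2 s
    simp only [ContinuousLinearMap.add_apply, ContinuousLinearMap.smul_apply,
      ContinuousLinearMap.id_apply] at this
    rw [inner_add_right, real_inner_smul_right, real_inner_self_eq_norm_sq] at this
    rw [real_inner_comm]
    linarith
  -- combine
  have hkey : P (x + s) - P x ≤
      -(c/2) * ‖s‖ ^ 2 + ε / 12 * ‖s‖ + Real.sqrt (ε * HL) / 12 * ‖s‖ ^ 2 + HL / 6 * ‖s‖ ^ 3 := by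
    nlinarith [htaylor, h1, h2, h3]
  -- arithmetic
  set a := Real.sqrt ε with hadef
  set b := Real.sqrt HL with hbdef
  have ha0 : 0 < a := Real.sqrt_pos.2 hε
  have hb0 : 0 < b := Real.sqrt_pos.2 hHL
  have ha2 : a ^ 2 = ε := Real.sq_sqrt hε.le
  have hb2 : b ^ 2 = HL := Real.sq_sqrt hHL.le
  have hsab : Real.sqrt (ε * HL) = a * b := Real.sqrt_mul hε.le HL
  have hsn : ‖s‖ = a / b := by rw [hsnorm, hadef, hbdef, Real.sqrt_div hε.le]
  have hcb : a * b ≤ c := by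
    have h5 : Real.sqrt (ε / HL) = a / b := by rw [hadef, hbdef, Real.sqrt_div hε.le]
    rw [h5] at hlam
    have : 2 * (a / b) * HL / 2 ≤ lam * HL / 2 := by
      apply div_le_div_of_nonneg_right ?_ (by norm_num)
      exact mul_le_mul_of_nonneg_right (by linarith) hHL.le
    have he : 2 * (a / b) * HL / 2 = a * b := by
      rw [← hb2]; field_simp
    linarith [this, he.ge]
  have hrpow : ε ^ ((3:ℝ)/2) = a ^ 3 := by
    rw [show (3:ℝ)/2 = (1/2) * 3 by norm_num, Real.rpow_mul hε.le,
      show ((3:ℝ) = ((3:ℕ):ℝ)) by norm_num, Real.rpow_natCast,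
      show ε ^ ((1:ℝ)/2) = a by rw [hadef, Real.sqrt_eq_rpow]]
  rw [hrpow]
  rw [hsn, hsab] at hkey
  have hfinal : -(c/2) * (a/b) ^ 2 + ε / 12 * (a/b) + a * b / 12 * (a/b) ^ 2 + HL / 6 * (a/b) ^ 3
      ≤ -(1/6) * a ^ 3 / b := by
    rw [← ha2, ← hb2]
    set X := a ^ 3 / b with hX
    have e1 : -(c/2) * (a^2/b^2) + a^2/12*(a/b) + a*b/12*(a^2/b^2) + b^2/6*(a^3/b^3)
        = X/3 - (c/2)*(a^2/b^2) := by
      rw [hX]; field_simp; ring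
    have e2 : (a*b/2)*(a^2/b^2) = X/2 := by rw [hX]; field_simp
    have e3 : (a*b/2)*(a^2/b^2) ≤ (c/2)*(a^2/b^2) :=
      mul_le_mul_of_nonneg_right (by linarith) (by positivity)
    have e4 : -(1/6)*a^3/b = -(X/6) := by rw [hX]; ring
    simp only [div_pow]
    rw [e1, e4]
    linarith [e2 ▸ e3]
  linarith [hkey, hfinal]
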